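/- arXiv:1006.4804 — 2 statements merged into one kernel-verified Lean document; each statement's English description precedes it below -/
import Mathlib

section
/- Let X : ℝ → Matrix (Fin n) (Fin n) ℝ be continuous on [0, b]. Then the matrix-valued function ℰ(X) is differentiable on (0, b) and satisfies the matrix differential equation d/dx ℰ(X)(x) = X(x) · ℰ(X)(x), with ℰ(X)(0) = 1. -/
open MeasureTheory Matrix

/- Matrices are equipped with the elementwise sup norm. -/
attribute [local instance] Matrix.normedAddCommGroup Matrix.normedSpace

/-- Terms of the left integral series: `E_0(x) = 1`, `E_{k+1}(x) = ∫_0^x X(t) * E_k(t) dt`. -/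
noncomputable def lterm {ι : Type*} [Fintype ι] [DecidableEq ι]
    (X : ℝ → Matrix ι ι ℝ) : ℕ → ℝ → Matrix ι ι ℝ
  | 0, _ => 1
  | k + 1, x => ∫ t in (0:ℝ)..x, X t * lterm X k t

/-- The left integral series `ℰ(X)(x) = ∑_{k=0}^∞ E_k(x)`. -/
noncomputable def ES {ι : Type*} [Fintype ι] [DecidableEq ι]
    (X : ℝ → Matrix ι ι ℝ) (x : ℝ) : Matrix ι ι ℝ := ∑' k, lterm X k x

/-- Terms of the right integral series: `F_0(x) = 1`, `F_{k+1}(x) = ∫_0^x F_k(t) * X(t) dt`. -/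
noncomputable def rterm {ι : Type*} [Fintype ι] [DecidableEq ι]
    (X : ℝ → Matrix ι ι ℝ) : ℕ → ℝ → Matrix ι ι ℝ
  | 0, _ => 1
  | k + 1, x => ∫ t in (0:ℝ)..x, rterm X k t * X t

/-- The right integral series `ℱ(X)(x) = ∑_{k=0}^∞ F_k(x)`. -/
noncomputable def FS {ι : Type*} [Fintype ι] [DecidableEq ι]
    (X : ℝ → Matrix ι ι ℝ) (x : ℝ) : Matrix ι ι ℝ := ∑' k, rterm X k x

lemma aux_norm_one {n : ℕ} : ‖(1 : Matrix (Fin n) (Fin n) ℝ)‖ ≤ 1 := by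
  rw [Matrix.norm_le_iff (by norm_num : (0:ℝ) ≤ 1)]
  intro i j
  simp only [Matrix.one_apply]
  split <;> simp

lemma aux_norm_mul {n : ℕ} (A B : Matrix (Fin n) (Fin n) ℝ) :
    ‖A * B‖ ≤ n * ‖A‖ * ‖B‖ := by
  have h0 : (0:ℝ) ≤ n * ‖A‖ * ‖B‖ := by positivity
  rw [Matrix.norm_le_iff h0]
  intro i j
  calc ‖(A * B) i j‖ = ‖∑ k, A i k * B k j‖ := by rw [Matrix.mul_apply]
    _ ≤ ∑ k, ‖A i k * B k j‖ := norm_sum_le _ _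
    _ ≤ ∑ _k : Fin n, ‖A‖ * ‖B‖ := by
        refine Finset.sum_le_sum fun k _ => ?_
        rw [norm_mul]
        exact mul_le_mul (A.norm_entry_le_entrywise_sup_norm)
          (B.norm_entry_le_entrywise_sup_norm) (norm_nonneg _) (norm_nonneg _)
    _ = n * ‖A‖ * ‖B‖ := by simp [Finset.sum_const, mul_assoc]

lemma aux_contOn_mul {n : ℕ} {s : Set ℝ} {f g : ℝ → Matrix (Fin n) (Fin n) ℝ}
    (hf : ContinuousOn f s) (hg : ContinuousOn g s) :
    ContinuousOn (fun x => f x * g x) s :=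
  hf.mul hg

lemma aux_cont {n : ℕ} {b : ℝ} (hb : 0 ≤ b) {X : ℝ → Matrix (Fin n) (Fin n) ℝ}
    (hX : ContinuousOn X (Set.Icc 0 b)) (k : ℕ) :
    ContinuousOn (lterm X k) (Set.Icc 0 b) := by
  induction k with
  | zero => exact continuousOn_const
  | succ k ih =>
    have hf : ContinuousOn (fun t => X t * lterm X k t) (Set.Icc 0 b) :=
      aux_contOn_mul hX ih
    have : Set.Icc (0:ℝ) b = Set.uIcc 0 b := (Set.uIcc_of_le hb).symm
    show ContinuousOn (fun x => ∫ t in (0:ℝ)..x, X t * lterm X k t) (Set.Icc 0 b)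
    rw [this]
    exact intervalIntegral.continuousOn_primitive_interval
      (by rw [← this]; exact hf.integrableOn_Icc)

lemma aux_bound {n : ℕ} {b M : ℝ} (hb : 0 ≤ b) (hM : 0 ≤ M)
    {X : ℝ → Matrix (Fin n) (Fin n) ℝ} (hX : ContinuousOn X (Set.Icc 0 b))
    (hXM : ∀ t ∈ Set.Icc (0:ℝ) b, ‖X t‖ ≤ M) (k : ℕ) :
    ∀ x ∈ Set.Icc (0:ℝ) b, ‖lterm X k x‖ ≤ (n * M) ^ k * x ^ k / k.factorial := by
  induction k with
  | zero => intro x hx; simpa [lterm] using aux_norm_one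
  | succ k ih =>
    intro x hx
    obtain ⟨hx0, hxb⟩ := hx
    have hMn : (0:ℝ) ≤ n * M := by positivity
    have hsub : Set.Icc (0:ℝ) x ⊆ Set.Icc 0 b := Set.Icc_subset_Icc le_rfl hxb
    have hg : IntervalIntegrable (fun t => (n*M)^(k+1) * t ^ k / k.factorial)
        MeasureTheory.volume 0 x := by
      apply Continuous.intervalIntegrable; continuity
    have hbd : ∀ᵐ t ∂(MeasureTheory.volume.restrict (Set.uIoc (0:ℝ) x)),
        ‖X t * lterm X k t‖ ≤ (n*M)^(k+1) * t ^ k / k.factorial := by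
      rw [Set.uIoc_of_le hx0]
      refine (ae_restrict_iff' measurableSet_Ioc).2 (Filter.Eventually.of_forall ?_)
      intro t ht
      have htI : t ∈ Set.Icc (0:ℝ) b := ⟨ht.1.le, ht.2.trans hxb⟩
      calc ‖X t * lterm X k t‖ ≤ n * ‖X t‖ * ‖lterm X k t‖ := aux_norm_mul _ _
        _ ≤ n * M * ((n*M)^k * t^k / k.factorial) := by
            apply mul_le_mul
            · exact mul_le_mul_of_nonneg_left (hXM t htI) (by positivity)
            · exact ih t htI
            · exact norm_nonneg _
            · exact hMn
        _ = (n*M)^(k+1) * t ^ k / k.factorial := by ring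
    have key := intervalIntegral.norm_integral_le_abs_of_norm_le hbd hg
    have hval : (∫ t in (0:ℝ)..x, (n*M)^(k+1) * t ^ k / k.factorial)
        = (n*M)^(k+1) * x^(k+1) / (k+1).factorial := by
      have : (fun t => (n*M)^(k+1) * t ^ k / k.factorial)
          = fun t => ((n*M)^(k+1) / k.factorial) * t ^ k := by funext t; ring
      rw [this, intervalIntegral.integral_const_mul, integral_pow]
      rw [Nat.factorial_succ]
      have h1 : ((k.factorial : ℝ)) ≠ 0 := Nat.cast_ne_zero.mpr k.factorial_ne_zero
      have h2 : ((k:ℝ) + 1) ≠ 0 := by positivity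
      push_cast
      field_simp
      ring
    show ‖∫ t in (0:ℝ)..x, X t * lterm X k t‖ ≤ _
    rw [hval] at key
    refine key.trans (le_of_eq (abs_of_nonneg ?_))
    positivity

lemma aux_deriv {n : ℕ} {b : ℝ} {X : ℝ → Matrix (Fin n) (Fin n) ℝ}
    (hX : ContinuousOn X (Set.Icc 0 b)) (k : ℕ) {x : ℝ} (hx : x ∈ Set.Ioo (0:ℝ) b) :
    HasDerivAt (lterm X (k+1)) (X x * lterm X k x) x := by
  have hb : (0:ℝ) ≤ b := hx.1.le.trans hx.2.le
  have hf : ContinuousOn (fun t => X t * lterm X k t) (Set.Icc 0 b) :=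
    aux_contOn_mul hX (aux_cont hb hX k)
  have hmem : Set.Icc (0:ℝ) b ∈ nhds x :=
    Filter.mem_of_superset (isOpen_Ioo.mem_nhds hx) Set.Ioo_subset_Icc_self
  haveI : TopologicalSpace.PseudoMetrizableSpace (Matrix (Fin n) (Fin n) ℝ) :=
    inferInstanceAs (TopologicalSpace.PseudoMetrizableSpace (Fin n → Fin n → ℝ))
  have hint := ContinuousOn.intervalIntegrable (μ := MeasureTheory.volume)
    (hf.mono (show Set.uIcc (0:ℝ) x ⊆ Set.Icc 0 b by
      rw [Set.uIcc_of_le hx.1.le]; exact Set.Icc_subset_Icc le_rfl hx.2.le))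
  have hmeas : StronglyMeasurableAtFilter (fun t => X t * lterm X k t) (nhds x) :=
    ⟨Set.Icc 0 b, hmem, hf.aestronglyMeasurable measurableSet_Icc⟩
  have hcont : ContinuousAt (fun t => X t * lterm X k t) x :=
    hf.continuousAt hmem
  exact intervalIntegral.integral_hasDerivAt_right hint hmeas hcont

set_option maxHeartbeats 2000000 in
/-- `ℰ(X)` solves `d/dx ℰ(X)(x) = X(x) * ℰ(X)(x)`, `ℰ(X)(0) = 1`. -/
theorem ES_hasDerivAt {n : ℕ} (b : ℝ) (X : ℝ → Matrix (Fin n) (Fin n) ℝ)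
    (hX : ContinuousOn X (Set.Icc 0 b)) :
    (∀ x ∈ Set.Ioo (0:ℝ) b, HasDerivAt (ES X) (X x * ES X x) x) ∧ ES X 0 = 1 := by
  constructor
  · intro x hx
    have hb : (0:ℝ) ≤ b := hx.1.le.trans hx.2.le
    obtain ⟨C, hC⟩ := (isCompact_Icc.exists_bound_of_continuousOn hX)
    set M : ℝ := max C 0 with hMdef
    have hM : 0 ≤ M := le_max_right _ _
    have hXM : ∀ t ∈ Set.Icc (0:ℝ) b, ‖X t‖ ≤ M := fun t ht =>
      (hC t ht).trans (le_max_left _ _)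
    set g' : ℕ → ℝ → Matrix (Fin n) (Fin n) ℝ := fun k y =>
      match k with
      | 0 => 0
      | k + 1 => X y * lterm X k y with hg'def
    set u : ℕ → ℝ := fun k =>
      match k with
      | 0 => 0
      | k + 1 => (n*M) * ((n*M*b)^k / k.factorial) with hudef
    have hu : Summable u := by
      rw [← summable_nat_add_iff 1]
      exact (Real.summable_pow_div_factorial (n*M*b)).mul_left (n*M)
    have hbound : ∀ k y, y ∈ Set.Ioo (0:ℝ) b → ‖g' k y‖ ≤ u k := by
      intro k y hy
      match k with
      | 0 => simp [hg'def, hudef]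
      | k + 1 =>
        have hyI : y ∈ Set.Icc (0:ℝ) b := Set.Ioo_subset_Icc_self hy
        calc ‖X y * lterm X k y‖ ≤ n * ‖X y‖ * ‖lterm X k y‖ := aux_norm_mul _ _
          _ ≤ n * M * ((n*M)^k * y^k / k.factorial) := by
              apply mul_le_mul
              · exact mul_le_mul_of_nonneg_left (hXM y hyI) (by positivity)
              · exact aux_bound hb hM hX hXM k y hyI
              · exact norm_nonneg _
              · positivity
          _ ≤ (n*M) * ((n*M*b)^k / k.factorial) := by
              have hnum : ((n:ℝ)*M)^k * y^k ≤ ((n:ℝ)*M*b)^k := by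
                rw [show ((n:ℝ)*M*b)^k = ((n:ℝ)*M)^k * b^k from mul_pow _ _ _]
                exact mul_le_mul_of_nonneg_left (pow_le_pow_left₀ hyI.1 hyI.2 k)
                  (by positivity)
              have : ((n:ℝ)*M)^k * y^k / k.factorial ≤ ((n:ℝ)*M*b)^k / k.factorial := by
                gcongr
              exact mul_le_mul_of_nonneg_left this (by positivity)
    have hderiv : ∀ k y, y ∈ Set.Ioo (0:ℝ) b → HasDerivAt (lterm X k) (g' k y) y := by
      intro k y hy
      match k with
      | 0 =>
        have : lterm X 0 = fun _ : ℝ => (1 : Matrix (Fin n) (Fin n) ℝ) := rfl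
        rw [this]; exact hasDerivAt_const y 1
      | k + 1 => exact aux_deriv hX k hy
    have hsum0 : Summable (fun k => lterm X k x) := by
      apply Summable.of_norm_bounded (g := fun k => (n*M*b)^k / k.factorial)
        (Real.summable_pow_div_factorial _)
      intro k
      refine (aux_bound hb hM hX hXM k x (Set.Ioo_subset_Icc_self hx)).trans ?_
      have hnum : ((n:ℝ)*M)^k * x^k ≤ ((n:ℝ)*M*b)^k := by
        rw [show ((n:ℝ)*M*b)^k = ((n:ℝ)*M)^k * b^k from mul_pow _ _ _]
        exact mul_le_mul_of_nonneg_left (pow_le_pow_left₀ hx.1.le hx.2.le k)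
          (by positivity)
      gcongr
    have main := hasDerivAt_tsum_of_isPreconnected hu isOpen_Ioo
      (isPreconnected_Ioo) hderiv hbound hx hsum0 hx
    have hsumg' : Summable (fun k => g' k x) :=
      Summable.of_norm_bounded (g := u) hu (fun k => hbound k x hx)
    have heq : (∑' k, g' k x) = X x * ES X x := by
      rw [Summable.tsum_eq_zero_add hsumg']
      have h0 : g' 0 x = 0 := rfl
      rw [h0, zero_add]
      have : (fun k => g' (k+1) x) = fun k => X x * lterm X k x := rfl
      rw [this]
      set L : Matrix (Fin n) (Fin n) ℝ →L[ℝ] Matrix (Fin n) (Fin n) ℝ :=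
        LinearMap.toContinuousLinearMap (LinearMap.mulLeft ℝ (X x)) with hL
      have := (L.map_tsum hsum0).symm
      simpa [hL, ES] using this
    rw [← heq]
    exact main
  · have h0 : ∀ k : ℕ, k ≠ 0 → lterm X k (0:ℝ) = 0 := by
      intro k hk
      match k with
      | k + 1 => exact intervalIntegral.integral_same
    calc ES X 0 = ∑' k, lterm X k 0 := rfl
      _ = lterm X 0 0 := tsum_eq_single 0 h0
      _ = 1 := rfl
end

section
/- Let X : ℝ → Matrix (Fin n) (Fin n) ℝ be continuous on [0, b]. Then for every x ∈ [0, b], ℱ(X)(x) · ℰ(−X)(x) = 1 and ℰ(−X)(x) · ℱ(X)(x) = 1; that is, ℰ(−X)(x) is the two-sided inverse of ℱ(X)(x). -/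
open MeasureTheory Matrix

/- Matrices are equipped with the elementwise sup norm. -/
attribute [local instance] Matrix.normedAddCommGroup Matrix.normedSpace

section Aux

set_option linter.unusedSectionVars false
set_option linter.unusedVariables false

variable {ι : Type*} [Fintype ι] [DecidableEq ι] {Y : ℝ → Matrix ι ι ℝ}

theorem continuous_rterm (hY : Continuous Y) : ∀ k, Continuous (rterm Y k)
  | 0 => continuous_const
  | k + 1 => by
    have h := (continuous_rterm hY k).matrix_mul hY
    exact intervalIntegral.continuous_primitive (fun a b => h.intervalIntegrable a b) 0

theorem continuous_lterm (hY : Continuous Y) : ∀ k, Continuous (lterm Y k)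
  | 0 => continuous_const
  | k + 1 => by
    have h := hY.matrix_mul (continuous_lterm hY k)
    exact intervalIntegral.continuous_primitive (fun a b => h.intervalIntegrable a b) 0

theorem hasDerivAt_rterm (hY : Continuous Y) (k : ℕ) (x : ℝ) :
    HasDerivAt (rterm Y (k + 1)) (rterm Y k x * Y x) x :=
  (((continuous_rterm hY k).matrix_mul hY).integral_hasStrictDerivAt 0 x).hasDerivAt

theorem hasDerivAt_lterm (hY : Continuous Y) (k : ℕ) (x : ℝ) :
    HasDerivAt (lterm Y (k + 1)) (Y x * lterm Y k x) x :=
  ((hY.matrix_mul (continuous_lterm hY k)).integral_hasStrictDerivAt 0 x).hasDerivAt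

theorem rterm_zero (k : ℕ) : rterm Y (k + 1) 0 = 0 := by
  simp [rterm]

theorem lterm_zero (k : ℕ) : lterm Y (k + 1) 0 = 0 := by
  simp [lterm]

theorem matrix_norm_mul_le (A B : Matrix ι ι ℝ) :
    ‖A * B‖ ≤ (Fintype.card ι : ℝ) * ‖A‖ * ‖B‖ := by
  refine (Matrix.norm_le_iff (by positivity)).2 fun i j => ?_
  calc ‖(A * B) i j‖ = ‖∑ k, A i k * B k j‖ := by rw [Matrix.mul_apply]
    _ ≤ ∑ k, ‖A i k * B k j‖ := norm_sum_le _ _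
    _ ≤ ∑ _k : ι, ‖A‖ * ‖B‖ := by
        refine Finset.sum_le_sum fun k _ => ?_
        rw [norm_mul]
        exact mul_le_mul (Matrix.norm_entry_le_entrywise_sup_norm A)
          (Matrix.norm_entry_le_entrywise_sup_norm B) (norm_nonneg _) (norm_nonneg _)
    _ = (Fintype.card ι : ℝ) * ‖A‖ * ‖B‖ := by
        simp [Finset.sum_const, Finset.card_univ, mul_assoc]

noncomputable def mulCLM (ι : Type*) [Fintype ι] [DecidableEq ι] :
    Matrix ι ι ℝ →L[ℝ] Matrix ι ι ℝ →L[ℝ] Matrix ι ι ℝ :=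
  LinearMap.mkContinuous₂ (LinearMap.mul ℝ (Matrix ι ι ℝ)) (Fintype.card ι)
    fun A B => matrix_norm_mul_le A B

theorem hasDerivAt_matrix_mul {u v : ℝ → Matrix ι ι ℝ} {u' v' : Matrix ι ι ℝ} {x : ℝ}
    (hu : HasDerivAt u u' x) (hv : HasDerivAt v v' x) :
    HasDerivAt (fun t => u t * v t) (u x * v' + u' * v x) x :=
  (mulCLM ι).hasDerivAt_of_bilinear (fun _ => hu) (fun _ => hv)

/-- Derivative of `rterm` at any index. -/
noncomputable def rD (Y : ℝ → Matrix ι ι ℝ) : ℕ → ℝ → Matrix ι ι ℝ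
  | 0, _ => 0
  | k + 1, x => rterm Y k x * Y x

noncomputable def lD (Y : ℝ → Matrix ι ι ℝ) : ℕ → ℝ → Matrix ι ι ℝ
  | 0, _ => 0
  | k + 1, x => Y x * lterm Y k x

theorem hasDerivAt_rterm' (hY : Continuous Y) (k : ℕ) (x : ℝ) :
    HasDerivAt (rterm Y k) (rD Y k x) x := by
  cases k with
  | zero => exact hasDerivAt_const x 1
  | succ k => exact hasDerivAt_rterm hY k x

theorem hasDerivAt_lterm' (hY : Continuous Y) (k : ℕ) (x : ℝ) :
    HasDerivAt (lterm Y k) (lD Y k x) x := by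
  cases k with
  | zero => exact hasDerivAt_const x 1
  | succ k => exact hasDerivAt_lterm hY k x

/-- The Cauchy-product coefficients of `ℱ(Y) ⬝ ℰ(-Y)` vanish in positive degree. -/
theorem sum_FE (hY : Continuous Y) (k : ℕ) (x : ℝ) :
    ∑ p ∈ Finset.HasAntidiagonal.antidiagonal (k + 1),
      rterm Y p.1 x * lterm (fun t => -Y t) p.2 x = 0 := by
  set Z : ℝ → Matrix ι ι ℝ := fun t => -Y t with hZ
  have hZc : Continuous Z := hY.neg
  set G : ℝ → Matrix ι ι ℝ :=
    fun x => ∑ p ∈ Finset.HasAntidiagonal.antidiagonal (k + 1), rterm Y p.1 x * lterm Z p.2 x with hG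
  have hder : ∀ x, HasDerivAt G 0 x := by
    intro x
    have h1 : HasDerivAt G
        (∑ p ∈ Finset.HasAntidiagonal.antidiagonal (k + 1),
          (rterm Y p.1 x * lD Z p.2 x + rD Y p.1 x * lterm Z p.2 x)) x :=
      HasDerivAt.fun_sum fun (p : ℕ × ℕ) _ =>
        hasDerivAt_matrix_mul (hasDerivAt_rterm' hY p.1 x) (hasDerivAt_lterm' hZc p.2 x)
    have h2 : (∑ p ∈ Finset.HasAntidiagonal.antidiagonal (k + 1),
        (rterm Y p.1 x * lD Z p.2 x + rD Y p.1 x * lterm Z p.2 x)) = 0 := by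
      rw [Finset.sum_add_distrib]
      have hA : (∑ p ∈ Finset.HasAntidiagonal.antidiagonal (k + 1), rterm Y p.1 x * lD Z p.2 x)
          = ∑ p ∈ Finset.HasAntidiagonal.antidiagonal k, rterm Y p.1 x * (Z x * lterm Z p.2 x) := by
        rw [Finset.Nat.sum_antidiagonal_succ'
          (f := fun p => rterm Y p.1 x * lD Z p.2 x)]
        simp [lD]
      have hB : (∑ p ∈ Finset.HasAntidiagonal.antidiagonal (k + 1), rD Y p.1 x * lterm Z p.2 x)
          = ∑ p ∈ Finset.HasAntidiagonal.antidiagonal k, rterm Y p.1 x * Y x * lterm Z p.2 x := by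
        rw [Finset.Nat.sum_antidiagonal_succ
          (f := fun p => rD Y p.1 x * lterm Z p.2 x)]
        simp [rD]
      rw [hA, hB, ← Finset.sum_add_distrib]
      refine Finset.sum_eq_zero fun p _ => ?_
      simp [hZ, mul_assoc]
    rw [← h2]; exact h1
  have hconst : G x = G 0 :=
    is_const_of_deriv_eq_zero (fun y => (hder y).differentiableAt)
      (fun y => (hder y).deriv) x 0
  have hG0 : G 0 = 0 := by
    rw [hG]
    refine Finset.sum_eq_zero fun p hp => ?_
    rcases p with ⟨i, j⟩
    rcases Nat.eq_zero_or_pos i with hi | hi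
    · subst hi
      have hj : j = k + 1 := by simpa using (Finset.HasAntidiagonal.mem_antidiagonal.1 hp)
      subst hj
      simp [lterm_zero]
    · obtain ⟨i', rfl⟩ := Nat.exists_eq_succ_of_ne_zero hi.ne'
      simp [rterm_zero]
  exact hconst.trans hG0

/-- The Cauchy-product coefficients of `ℰ(-Y) ⬝ ℱ(Y)`. -/
theorem sum_EF (hY : Continuous Y) : ∀ (k : ℕ) (x : ℝ),
    ∑ p ∈ Finset.HasAntidiagonal.antidiagonal k,
      lterm (fun t => -Y t) p.1 x * rterm Y p.2 x
      = if k = 0 then 1 else 0 := by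
  have hZc : Continuous (fun t => -Y t) := hY.neg
  intro k
  induction k with
  | zero => intro x; simp [lterm, rterm]
  | succ k ih =>
    set Z : ℝ → Matrix ι ι ℝ := fun t => -Y t with hZ
    intro x
    set T : ℝ → Matrix ι ι ℝ :=
      fun x => ∑ p ∈ Finset.HasAntidiagonal.antidiagonal (k + 1), lterm Z p.1 x * rterm Y p.2 x with hT
    have hder : ∀ x, HasDerivAt T 0 x := by
      intro x
      have h1 : HasDerivAt T
          (∑ p ∈ Finset.HasAntidiagonal.antidiagonal (k + 1),
            (lterm Z p.1 x * rD Y p.2 x + lD Z p.1 x * rterm Y p.2 x)) x :=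
        HasDerivAt.fun_sum fun (p : ℕ × ℕ) _ =>
          hasDerivAt_matrix_mul (hasDerivAt_lterm' hZc p.1 x) (hasDerivAt_rterm' hY p.2 x)
      have h2 : (∑ p ∈ Finset.HasAntidiagonal.antidiagonal (k + 1),
          (lterm Z p.1 x * rD Y p.2 x + lD Z p.1 x * rterm Y p.2 x)) = 0 := by
        rw [Finset.sum_add_distrib]
        have hA : (∑ p ∈ Finset.HasAntidiagonal.antidiagonal (k + 1), lterm Z p.1 x * rD Y p.2 x)
            = (∑ p ∈ Finset.HasAntidiagonal.antidiagonal k, lterm Z p.1 x * rterm Y p.2 x) * Y x := by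
          rw [Finset.Nat.sum_antidiagonal_succ'
            (f := fun p => lterm Z p.1 x * rD Y p.2 x)]
          rw [Finset.sum_mul]
          simp [rD, mul_assoc]
        have hB : (∑ p ∈ Finset.HasAntidiagonal.antidiagonal (k + 1), lD Z p.1 x * rterm Y p.2 x)
            = -(Y x * ∑ p ∈ Finset.HasAntidiagonal.antidiagonal k, lterm Z p.1 x * rterm Y p.2 x) := by
          rw [Finset.Nat.sum_antidiagonal_succ
            (f := fun p => lD Z p.1 x * rterm Y p.2 x)]
          rw [Finset.mul_sum]
          simp [lD, hZ, mul_assoc, neg_mul, Finset.sum_neg_distrib]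
        rw [hA, hB, ih x]
        split <;> simp
      rw [← h2]; exact h1
    have hconst : T x = T 0 :=
      is_const_of_deriv_eq_zero (fun y => (hder y).differentiableAt)
        (fun y => (hder y).deriv) x 0
    have hT0 : T 0 = 0 := by
      rw [hT]
      refine Finset.sum_eq_zero fun p hp => ?_
      rcases p with ⟨i, j⟩
      rcases Nat.eq_zero_or_pos i with hi | hi
      · subst hi
        have hj : j = k + 1 := by simpa using (Finset.HasAntidiagonal.mem_antidiagonal.1 hp)
        subst hj
        simp [rterm_zero]
      · obtain ⟨i', rfl⟩ := Nat.exists_eq_succ_of_ne_zero hi.ne'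
        simp [lterm_zero]
    simp only [Nat.succ_ne_zero, if_false]
    exact hconst.trans hT0

theorem matrix_norm_one_le : ‖(1 : Matrix ι ι ℝ)‖ ≤ 1 := by
  refine (Matrix.norm_le_iff zero_le_one).2 fun i j => ?_
  rw [Matrix.one_apply]
  split <;> simp

theorem rterm_norm_bound (hY : Continuous Y) {x C : ℝ} (hx : 0 ≤ x) (hC : 0 ≤ C)
    (hb : ∀ t ∈ Set.Icc (0:ℝ) x, ‖Y t‖ ≤ C) :
    ∀ k, ∀ t ∈ Set.Icc (0:ℝ) x,
      ‖rterm Y k t‖ ≤ ((Fintype.card ι : ℝ) * C) ^ k * t ^ k / k.factorial := by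
  set K : ℝ := (Fintype.card ι : ℝ) * C with hK
  have hK0 : 0 ≤ K := by positivity
  intro k
  induction k with
  | zero => intro t _; simpa [rterm] using matrix_norm_one_le
  | succ k ih =>
    intro t ht
    have ht0 : 0 ≤ t := ht.1
    have hsub : Set.Icc (0:ℝ) t ⊆ Set.Icc (0:ℝ) x := Set.Icc_subset_Icc le_rfl ht.2
    have hcont : Continuous fun s => rterm Y k s * Y s := (continuous_rterm hY k).matrix_mul hY
    calc ‖rterm Y (k + 1) t‖ = ‖∫ s in (0:ℝ)..t, rterm Y k s * Y s‖ := rfl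
      _ ≤ ∫ s in (0:ℝ)..t, ‖rterm Y k s * Y s‖ :=
          intervalIntegral.norm_integral_le_integral_norm ht0
      _ ≤ ∫ s in (0:ℝ)..t, K ^ (k + 1) * s ^ k / k.factorial := by
          refine intervalIntegral.integral_mono_on ht0
            (hcont.norm.intervalIntegrable _ _)
            ((by continuity : Continuous fun s : ℝ =>
              K ^ (k + 1) * s ^ k / k.factorial).intervalIntegrable _ _) fun s hs => ?_
          have hs' := hsub hs
          have h1 : ‖rterm Y k s * Y s‖ ≤ (Fintype.card ι : ℝ) * ‖rterm Y k s‖ * ‖Y s‖ :=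
            matrix_norm_mul_le _ _
          have h2 : (Fintype.card ι : ℝ) * ‖rterm Y k s‖ * ‖Y s‖
              ≤ (Fintype.card ι : ℝ) * (K ^ k * s ^ k / k.factorial) * C :=
            mul_le_mul (mul_le_mul_of_nonneg_left (ih s hs')
              (by positivity : (0:ℝ) ≤ (Fintype.card ι : ℝ))) (hb s hs') (norm_nonneg _)
              (mul_nonneg (Nat.cast_nonneg _) (div_nonneg
                (mul_nonneg (pow_nonneg hK0 _) (pow_nonneg hs.1 _)) (Nat.cast_nonneg _)))
          have h3 : (Fintype.card ι : ℝ) * (K ^ k * s ^ k / k.factorial) * C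
              = K ^ (k + 1) * s ^ k / k.factorial := by
            rw [pow_succ, hK]; ring
          linarith
      _ = K ^ (k + 1) * t ^ (k + 1) / (k + 1).factorial := by
          have h : ∀ s : ℝ, K ^ (k + 1) * s ^ k / k.factorial
              = (K ^ (k + 1) / k.factorial) * s ^ k := fun s => by ring
          simp_rw [h]
          rw [intervalIntegral.integral_const_mul, integral_pow]
          have hfac : ((k + 1).factorial : ℝ) = (k + 1) * k.factorial := by
            rw [Nat.factorial_succ]; push_cast; ring
          rw [hfac, zero_pow (Nat.succ_ne_zero k)]
          have h1 : (k.factorial : ℝ) ≠ 0 := Nat.cast_ne_zero.2 k.factorial_ne_zero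
          have h2 : ((k : ℝ) + 1) ≠ 0 := by positivity
          rw [div_mul_div_comm, sub_zero, mul_comm ((k.factorial : ℝ))]

theorem lterm_norm_bound (hY : Continuous Y) {x C : ℝ} (hx : 0 ≤ x) (hC : 0 ≤ C)
    (hb : ∀ t ∈ Set.Icc (0:ℝ) x, ‖Y t‖ ≤ C) :
    ∀ k, ∀ t ∈ Set.Icc (0:ℝ) x,
      ‖lterm Y k t‖ ≤ ((Fintype.card ι : ℝ) * C) ^ k * t ^ k / k.factorial := by
  set K : ℝ := (Fintype.card ι : ℝ) * C with hK
  have hK0 : 0 ≤ K := by positivity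
  intro k
  induction k with
  | zero => intro t _; simpa [lterm] using matrix_norm_one_le
  | succ k ih =>
    intro t ht
    have ht0 : 0 ≤ t := ht.1
    have hsub : Set.Icc (0:ℝ) t ⊆ Set.Icc (0:ℝ) x := Set.Icc_subset_Icc le_rfl ht.2
    have hcont : Continuous fun s => Y s * lterm Y k s := hY.matrix_mul (continuous_lterm hY k)
    calc ‖lterm Y (k + 1) t‖ = ‖∫ s in (0:ℝ)..t, Y s * lterm Y k s‖ := rfl
      _ ≤ ∫ s in (0:ℝ)..t, ‖Y s * lterm Y k s‖ :=
          intervalIntegral.norm_integral_le_integral_norm ht0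
      _ ≤ ∫ s in (0:ℝ)..t, K ^ (k + 1) * s ^ k / k.factorial := by
          refine intervalIntegral.integral_mono_on ht0
            (hcont.norm.intervalIntegrable _ _)
            ((by continuity : Continuous fun s : ℝ =>
              K ^ (k + 1) * s ^ k / k.factorial).intervalIntegrable _ _) fun s hs => ?_
          have hs' := hsub hs
          have h1 : ‖Y s * lterm Y k s‖ ≤ (Fintype.card ι : ℝ) * ‖Y s‖ * ‖lterm Y k s‖ :=
            matrix_norm_mul_le _ _
          have h2 : (Fintype.card ι : ℝ) * ‖Y s‖ * ‖lterm Y k s‖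
              ≤ (Fintype.card ι : ℝ) * C * (K ^ k * s ^ k / k.factorial) :=
            mul_le_mul (mul_le_mul_of_nonneg_left (hb s hs')
              (by positivity : (0:ℝ) ≤ (Fintype.card ι : ℝ))) (ih s hs') (norm_nonneg _)
              (by positivity)
          have h3 : (Fintype.card ι : ℝ) * C * (K ^ k * s ^ k / k.factorial)
              = K ^ (k + 1) * s ^ k / k.factorial := by
            rw [pow_succ, hK]; ring
          linarith
      _ = K ^ (k + 1) * t ^ (k + 1) / (k + 1).factorial := by
          have h : ∀ s : ℝ, K ^ (k + 1) * s ^ k / k.factorial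
              = (K ^ (k + 1) / k.factorial) * s ^ k := fun s => by ring
          simp_rw [h]
          rw [intervalIntegral.integral_const_mul, integral_pow]
          have hfac : ((k + 1).factorial : ℝ) = (k + 1) * k.factorial := by
            rw [Nat.factorial_succ]; push_cast; ring
          rw [hfac, zero_pow (Nat.succ_ne_zero k)]
          have h1 : (k.factorial : ℝ) ≠ 0 := Nat.cast_ne_zero.2 k.factorial_ne_zero
          have h2 : ((k : ℝ) + 1) ≠ 0 := by positivity
          rw [div_mul_div_comm, sub_zero, mul_comm ((k.factorial : ℝ))]

theorem aux_main (Y : ℝ → Matrix ι ι ℝ) (hY : Continuous Y) {x : ℝ} (hx : 0 ≤ x) :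
    FS Y x * ES (fun t => -Y t) x = 1 ∧ ES (fun t => -Y t) x * FS Y x = 1 := by
  set Z : ℝ → Matrix ι ι ℝ := fun t => -Y t with hZ
  have hZc : Continuous Z := hY.neg
  obtain ⟨C₀, hC₀⟩ := isCompact_Icc.exists_bound_of_continuousOn (hY.continuousOn :
    ContinuousOn Y (Set.Icc 0 x))
  set C : ℝ := max C₀ 0 with hCdef
  have hC : 0 ≤ C := le_max_right _ _
  have hbY : ∀ t ∈ Set.Icc (0:ℝ) x, ‖Y t‖ ≤ C := fun t ht => (hC₀ t ht).trans (le_max_left _ _)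
  have hbZ : ∀ t ∈ Set.Icc (0:ℝ) x, ‖Z t‖ ≤ C := fun t ht => by
    rw [hZ]; simpa using hbY t ht
  set K : ℝ := (Fintype.card ι : ℝ) * C with hKdef
  have hK : 0 ≤ K := by positivity
  set g : ℕ → ℝ := fun k => (K * x) ^ k / k.factorial with hgdef
  have hg : Summable g := Real.summable_pow_div_factorial (K * x)
  have hgnn : ∀ k, 0 ≤ g k := fun k => by
    have : 0 ≤ K * x := mul_nonneg hK hx
    positivity
  have hxx : x ∈ Set.Icc (0:ℝ) x := ⟨hx, le_rfl⟩
  have hFb : ∀ k, ‖rterm Y k x‖ ≤ g k := fun k => by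
    have := rterm_norm_bound hY hx hC hbY k x hxx
    rwa [← mul_pow] at this
  have hEb : ∀ k, ‖lterm Z k x‖ ≤ g k := fun k => by
    have := lterm_norm_bound hZc hx hC hbZ k x hxx
    rwa [← mul_pow] at this
  have hFs : Summable fun k => rterm Y k x := Summable.of_norm_bounded hg hFb
  have hEs : Summable fun k => lterm Z k x := Summable.of_norm_bounded hg hEb
  have hgg : Summable fun p : ℕ × ℕ => (Fintype.card ι : ℝ) * (g p.1 * g p.2) :=
    (hg.mul_of_nonneg hg hgnn hgnn).mul_left _
  have hbnd : ∀ (A B : Matrix ι ι ℝ) (i j : ℕ), ‖A‖ ≤ g i → ‖B‖ ≤ g j →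
      ‖A * B‖ ≤ (Fintype.card ι : ℝ) * (g i * g j) := by
    intro A B i j hA hB
    refine (matrix_norm_mul_le A B).trans ?_
    rw [mul_assoc]
    exact mul_le_mul_of_nonneg_left
      (mul_le_mul hA hB (norm_nonneg _) (hgnn i)) (by positivity)
  have hFE : Summable fun p : ℕ × ℕ => rterm Y p.1 x * lterm Z p.2 x :=
    Summable.of_norm_bounded hgg fun p => hbnd _ _ p.1 p.2 (hFb p.1) (hEb p.2)
  have hEF : Summable fun p : ℕ × ℕ => lterm Z p.1 x * rterm Y p.2 x :=
    Summable.of_norm_bounded ((hg.mul_of_nonneg hg hgnn hgnn).mul_left _)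
      fun p => hbnd _ _ p.1 p.2 (hEb p.1) (hFb p.2)
  constructor
  · show (∑' k, rterm Y k x) * (∑' k, lterm Z k x) = 1
    rw [Summable.tsum_mul_tsum_eq_tsum_sum_antidiagonal hFs hEs hFE]
    have hcoeff : ∀ k, (∑ p ∈ Finset.HasAntidiagonal.antidiagonal k, rterm Y p.1 x * lterm Z p.2 x)
        = if k = 0 then (1 : Matrix ι ι ℝ) else 0 := by
      intro k
      cases k with
      | zero => simp [rterm, lterm]
      | succ k => simpa using sum_FE hY k x
    rw [tsum_congr hcoeff, tsum_ite_eq]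
  · show (∑' k, lterm Z k x) * (∑' k, rterm Y k x) = 1
    rw [Summable.tsum_mul_tsum_eq_tsum_sum_antidiagonal hEs hFs hEF]
    have hcoeff : ∀ k, (∑ p ∈ Finset.HasAntidiagonal.antidiagonal k, lterm Z p.1 x * rterm Y p.2 x)
        = if k = 0 then (1 : Matrix ι ι ℝ) else 0 := fun k => sum_EF hY k x
    rw [tsum_congr hcoeff, tsum_ite_eq]

theorem rterm_congr {X Y : ℝ → Matrix ι ι ℝ} {b : ℝ}
    (h : ∀ t ∈ Set.Icc (0:ℝ) b, X t = Y t) :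
    ∀ k, ∀ x ∈ Set.Icc (0:ℝ) b, rterm X k x = rterm Y k x := by
  intro k
  induction k with
  | zero => intro x _; rfl
  | succ k ih =>
    intro x hx
    show (∫ t in (0:ℝ)..x, rterm X k t * X t) = ∫ t in (0:ℝ)..x, rterm Y k t * Y t
    refine intervalIntegral.integral_congr fun t ht => ?_
    rw [Set.uIcc_of_le hx.1] at ht
    have ht' : t ∈ Set.Icc (0:ℝ) b := Set.Icc_subset_Icc le_rfl hx.2 ht
    rw [h t ht', ih t ht']

theorem lterm_congr {X Y : ℝ → Matrix ι ι ℝ} {b : ℝ}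
    (h : ∀ t ∈ Set.Icc (0:ℝ) b, X t = Y t) :
    ∀ k, ∀ x ∈ Set.Icc (0:ℝ) b, lterm X k x = lterm Y k x := by
  intro k
  induction k with
  | zero => intro x _; rfl
  | succ k ih =>
    intro x hx
    show (∫ t in (0:ℝ)..x, X t * lterm X k t) = ∫ t in (0:ℝ)..x, Y t * lterm Y k t
    refine intervalIntegral.integral_congr fun t ht => ?_
    rw [Set.uIcc_of_le hx.1] at ht
    have ht' : t ∈ Set.Icc (0:ℝ) b := Set.Icc_subset_Icc le_rfl hx.2 ht
    rw [h t ht', ih t ht']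

end Aux

/-- `ℰ(−X)(x)` is the two-sided inverse of `ℱ(X)(x)`. -/
theorem FS_mul_ES_neg {n : ℕ} (b : ℝ) (X : ℝ → Matrix (Fin n) (Fin n) ℝ)
    (hX : ContinuousOn X (Set.Icc 0 b)) :
    ∀ x ∈ Set.Icc (0:ℝ) b,
      FS X x * ES (fun t => -X t) x = 1 ∧ ES (fun t => -X t) x * FS X x = 1 := by
  intro x hx
  have hb : (0:ℝ) ≤ b := hx.1.trans hx.2
  set Y : ℝ → Matrix (Fin n) (Fin n) ℝ := fun t => X (min (max t 0) b) with hYdef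
  have hmem : ∀ t : ℝ, min (max t 0) b ∈ Set.Icc (0:ℝ) b := fun t =>
    ⟨le_min (le_max_right t 0) hb, min_le_right _ _⟩
  have hYc : Continuous Y :=
    hX.comp_continuous ((continuous_id.max continuous_const).min continuous_const) hmem
  have heq : ∀ t ∈ Set.Icc (0:ℝ) b, X t = Y t := fun t ht => by
    rw [hYdef]
    simp only [max_eq_left ht.1, min_eq_left ht.2]
  have hFS : FS X x = FS Y x := tsum_congr fun k => rterm_congr heq k x hx
  have hES : ES (fun t => -X t) x = ES (fun t => -Y t) x :=
    tsum_congr fun k => lterm_congr (fun t ht => by rw [heq t ht]) k x hx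
  rw [hFS, hES]
  exact aux_main Y hYc hx.1
end
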